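/- Let R be a commutative f-ring and I an ideal of R that is also an ℓ-ideal (i.e., an order-convex sublattice subgroup closed under multiplication by arbitrary elements). Then the nil-radical √I = {x ∈ R : xⁿ ∈ I for some n ≥ 1} is again an ℓ-ideal. -/

import Mathlib

section aux
variable {R : Type*} [CommRing R] [Lattice R]
    [CovariantClass R R (· + ·) (· ≤ ·)]

lemma aux_swap : CovariantClass R R (Function.swap (· + ·)) (· ≤ ·) :=
  ⟨fun a b c h => by simpa [add_comm] using add_le_add_left h a⟩

lemma aux_mul_le_mul (hmul : ∀ a b : R, 0 ≤ a → 0 ≤ b → 0 ≤ a * b)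
    {a b c d : R} (ha : 0 ≤ a) (hab : a ≤ b) (hc : 0 ≤ c) (hcd : c ≤ d) :
    a * c ≤ b * d := by
  have hb : 0 ≤ b := ha.trans hab
  have h1 := hmul b (d - c) hb (sub_nonneg.2 hcd)
  have h2 := hmul (b - a) c (sub_nonneg.2 hab) hc
  have h3 : 0 ≤ b * d - a * c := by
    have e : b * d - a * c = b * (d - c) + (b - a) * c := by ring
    rw [e]; exact add_nonneg h1 h2
  exact sub_nonneg.1 h3

lemma aux_pow_nonneg (hmul : ∀ a b : R, 0 ≤ a → 0 ≤ b → 0 ≤ a * b)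
    {a : R} (ha : 0 ≤ a) : ∀ n : ℕ, 0 ≤ a ^ (n + 1) := by
  intro n
  induction n with
  | zero => simpa using ha
  | succ n ih => rw [pow_succ]; exact hmul _ _ ih ha

lemma aux_pow_le_pow (hmul : ∀ a b : R, 0 ≤ a → 0 ≤ b → 0 ≤ a * b)
    {a b : R} (ha : 0 ≤ a) (hab : a ≤ b) : ∀ n : ℕ, a ^ (n + 1) ≤ b ^ (n + 1) := by
  intro n
  induction n with
  | zero => simpa using hab
  | succ n ih =>
    rw [pow_succ, pow_succ b]
    exact aux_mul_le_mul hmul (aux_pow_nonneg hmul ha n) ih ha hab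

end aux

theorem stmt_8 {R : Type*} [CommRing R] [Lattice R]
    [CovariantClass R R (· + ·) (· ≤ ·)]
    (hmul : ∀ a b : R, 0 ≤ a → 0 ≤ b → 0 ≤ a * b)
    (hf : ∀ x y z : R, 0 ≤ z → x ⊓ y = 0 → (x * z) ⊓ y = 0)
    (I : Set R)
    (h0 : (0 : R) ∈ I)
    (hadd : ∀ x y : R, x ∈ I → y ∈ I → x + y ∈ I)
    (hneg : ∀ x : R, x ∈ I → -x ∈ I)
    (hconv : ∀ x y : R, y ∈ I → (x ⊔ -x) ≤ (y ⊔ -y) → x ∈ I)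
    (hmulI : ∀ x y : R, x ∈ I → x * y ∈ I) :
    (0 : R) ∈ {x : R | ∃ n : ℕ, 1 ≤ n ∧ x ^ n ∈ I} ∧
    (∀ x y : R, (∃ n : ℕ, 1 ≤ n ∧ x ^ n ∈ I) → (∃ n : ℕ, 1 ≤ n ∧ y ^ n ∈ I) →
        ∃ n : ℕ, 1 ≤ n ∧ (x + y) ^ n ∈ I) ∧
    (∀ x : R, (∃ n : ℕ, 1 ≤ n ∧ x ^ n ∈ I) → ∃ n : ℕ, 1 ≤ n ∧ (-x) ^ n ∈ I) ∧
    (∀ x y : R, (∃ n : ℕ, 1 ≤ n ∧ y ^ n ∈ I) → (x ⊔ -x) ≤ (y ⊔ -y) →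
        ∃ n : ℕ, 1 ≤ n ∧ x ^ n ∈ I) ∧
    (∀ x y : R, (∃ n : ℕ, 1 ≤ n ∧ x ^ n ∈ I) → ∃ n : ℕ, 1 ≤ n ∧ (x * y) ^ n ∈ I) := by
  haveI : CovariantClass R R (Function.swap (· + ·)) (· ≤ ·) := aux_swap
  -- `|x| := x ⊔ -x` is nonnegative and its square is `x ^ 2` (key f-ring fact)
  have habs_eq : ∀ x : R, x ⊔ -x = x⁺ + x⁻ := fun x => (posPart_add_negPart x).symm
  have habs_nonneg : ∀ x : R, 0 ≤ x ⊔ -x := by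
    intro x
    rw [habs_eq]
    exact add_nonneg (posPart_nonneg x) (negPart_nonneg x)
  have hsq : ∀ x : R, (x ⊔ -x) ^ 2 = x ^ 2 := by
    intro x
    have h1 : x⁺ ⊓ x⁻ = 0 := posPart_inf_negPart_eq_zero x
    have h2 : (x⁺ * x⁻) ⊓ x⁻ = 0 := hf _ _ _ (negPart_nonneg x) h1
    have h3 : (x⁻ * x⁺) ⊓ (x⁺ * x⁻) = 0 := by
      apply hf _ _ _ (posPart_nonneg x)
      rw [inf_comm]; exact h2
    have h4 : x⁺ * x⁻ = 0 := by
      rw [mul_comm, inf_idem] at h3; exact h3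
    have hx : x = x⁺ - x⁻ := (posPart_sub_negPart x).symm
    rw [habs_eq]
    linear_combination (4 : R) * h4 - (x + x⁺ - x⁻) * hx
  -- a nonneg element equals its own "absolute value"
  have hsup_self : ∀ a : R, 0 ≤ a → a ⊔ -a = a := by
    intro a ha
    exact sup_eq_left.2 ((neg_nonpos.2 ha).trans ha)
  refine ⟨⟨1, le_refl 1, by simpa using h0⟩, ?_, ?_, ?_, ?_⟩
  · -- addition
    rintro x y ⟨n, hn, hxn⟩ ⟨m, hm, hym⟩
    refine ⟨n + m, by omega, ?_⟩
    rw [add_pow]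
    classical
    have hsum : ∀ (s : Finset ℕ) (f : ℕ → R), (∀ i ∈ s, f i ∈ I) → (∑ i ∈ s, f i) ∈ I := by
      intro s f hfs
      induction s using Finset.induction with
      | empty => simpa using h0
      | insert _ _ hnot ih =>
        rw [Finset.sum_insert hnot]
        exact hadd _ _ (hfs _ (Finset.mem_insert_self _ _))
          (ih fun i hi => hfs i (Finset.mem_insert_of_mem hi))
    apply hsum
    intro k hk
    rw [Finset.mem_range] at hk
    by_cases hkn : n ≤ k
    · obtain ⟨j, rfl⟩ := Nat.exists_eq_add_of_le hkn
      have : x ^ (n + j) * y ^ (n + m - (n + j)) * ((n + m).choose (n + j) : R)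
          = x ^ n * (x ^ j * y ^ (n + m - (n + j)) * ((n + m).choose (n + j) : R)) := by
        rw [pow_add]; ring
      rw [this]
      exact hmulI _ _ hxn
    · have hm' : m ≤ n + m - k := by omega
      obtain ⟨j, hj⟩ := Nat.exists_eq_add_of_le hm'
      have : x ^ k * y ^ (n + m - k) * ((n + m).choose k : R)
          = y ^ m * (y ^ j * x ^ k * ((n + m).choose k : R)) := by
        rw [hj, pow_add]; ring
      rw [this]
      exact hmulI _ _ hym
  · -- negation
    rintro x ⟨n, hn, hxn⟩
    refine ⟨2 * n, by omega, ?_⟩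
    have : (-x) ^ (2 * n) = x ^ n * x ^ n := by
      rw [Even.neg_pow ⟨n, by ring⟩, two_mul, pow_add]
    rw [this]
    exact hmulI _ _ hxn
  · -- convexity
    rintro x y ⟨n, hn, hyn⟩ hxy
    refine ⟨2 * n, by omega, ?_⟩
    obtain ⟨k, hk⟩ : ∃ k, 2 * n = k + 1 := ⟨2 * n - 1, by omega⟩
    have hxpow : x ^ (2 * n) = (x ⊔ -x) ^ (2 * n) := by
      rw [pow_mul, ← hsq x, ← pow_mul]
    have hypow : (y ⊔ -y) ^ (2 * n) = (y ^ n) * (y ^ n) := by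
      rw [pow_mul, hsq, ← pow_mul, mul_comm 2 n, pow_mul, sq]
    have hxnn : 0 ≤ x ^ (2 * n) := by
      rw [hxpow, hk]; exact aux_pow_nonneg hmul (habs_nonneg x) k
    have hynn : 0 ≤ y ^ n * y ^ n := by
      rw [← hypow, hk]; exact aux_pow_nonneg hmul (habs_nonneg y) k
    have hle : x ^ (2 * n) ≤ y ^ n * y ^ n := by
      rw [hxpow, ← hypow, hk]
      exact aux_pow_le_pow hmul (habs_nonneg x) hxy k
    apply hconv (x ^ (2 * n)) (y ^ n * y ^ n) (hmulI _ _ hyn)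
    rw [hsup_self _ hxnn, hsup_self _ hynn]
    exact hle
  · -- multiplication
    rintro x y ⟨n, hn, hxn⟩
    refine ⟨n, hn, ?_⟩
    rw [mul_pow]
    exact hmulI _ _ hxn
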